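/- arXiv:2012.01161 — 2 statements merged into one kernel-verified Lean document; each statement's English description precedes it below -/
import Mathlib

section
/- For all real x with -π/2 < x < π/2 and all r > 0, the infinite product ∏_{n=1}^∞ (1 + 2(x² - ln²(2 cos x))/(r²n²) + (x² + ln²(2 cos x))²/(r⁴n⁴)) equals (r²/(2π²)) · (cosh(2πx/r) - cos(2π ln(2 cos x)/r)) / (x² + ln²(2 cos x)), provided x² + ln²(2 cos x) ≠ 0. -/
open Real

private lemma normSq_sinh_aux (a b : ℝ) :
    Complex.normSq (Complex.sinh ((a : ℂ) + (b : ℂ) * Complex.I)) =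
      (Real.cosh (2*a) - Real.cos (2*b)) / 2 := by
  have key : (Complex.normSq (Complex.sinh ((a : ℂ) + (b : ℂ) * Complex.I)) : ℂ)
      = ((Real.cosh (2*a) : ℝ) : ℂ) / 2 - ((Real.cos (2*b) : ℝ) : ℂ) / 2 := by
    rw [← Complex.mul_conj, ← Complex.sinh_conj]
    have hconj : (starRingEnd ℂ) ((a : ℂ) + (b : ℂ) * Complex.I) = (a : ℂ) - (b : ℂ) * Complex.I := by
      simp [Complex.ext_iff]
    rw [hconj]
    have h1 : Complex.sinh ((a : ℂ) + (b : ℂ) * Complex.I) *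
        Complex.sinh ((a : ℂ) - (b : ℂ) * Complex.I)
        = (Complex.cosh (((a : ℂ) + (b : ℂ) * Complex.I) + ((a : ℂ) - (b : ℂ) * Complex.I))
          - Complex.cosh (((a : ℂ) + (b : ℂ) * Complex.I) - ((a : ℂ) - (b : ℂ) * Complex.I))) / 2 := by
      linear_combination (Complex.cosh_sub ((a : ℂ) + (b : ℂ) * Complex.I) ((a : ℂ) - (b : ℂ) * Complex.I)
        - Complex.cosh_add ((a : ℂ) + (b : ℂ) * Complex.I) ((a : ℂ) - (b : ℂ) * Complex.I)) / 2
    rw [h1]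
    have h2 : ((a : ℂ) + (b : ℂ) * Complex.I) + ((a : ℂ) - (b : ℂ) * Complex.I) = ((2*a : ℝ) : ℂ) := by
      push_cast; ring
    have h3 : ((a : ℂ) + (b : ℂ) * Complex.I) - ((a : ℂ) - (b : ℂ) * Complex.I) = ((2*b : ℝ) : ℂ) * Complex.I := by
      push_cast; ring
    rw [h2, h3, Complex.cosh_mul_I, Complex.ofReal_cosh, Complex.ofReal_cos]
    ring
  have := key
  rw [div_sub_div_same] at this
  exact_mod_cast this

theorem stmt_0 (x r : ℝ) (hx1 : -(π/2) < x) (hx2 : x < π/2) (hr : 0 < r)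
    (hne : x^2 + (Real.log (2 * Real.cos x))^2 ≠ 0) :
    (∏' n : ℕ, (1 + 2 * (x^2 - (Real.log (2 * Real.cos x))^2) / (r^2 * (n+1)^2)
        + (x^2 + (Real.log (2 * Real.cos x))^2)^2 / (r^4 * (n+1)^4)))
      = (r^2 / (2 * π^2)) * (Real.cosh (2 * π * x / r) - Real.cos (2 * π * Real.log (2 * Real.cos x) / r))
        / (x^2 + (Real.log (2 * Real.cos x))^2) := by
  set L := Real.log (2 * Real.cos x) with hL
  have hrne : r ≠ 0 := hr.ne'
  have hπ : (π : ℝ) ≠ 0 := Real.pi_ne_zero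
  set w : ℂ := (x : ℂ) + (L : ℂ) * Complex.I with hw
  have hw_re : w.re = x := by simp [hw]
  have hw_im : w.im = L := by simp [hw]
  have hwsq_re : (w^2).re = x^2 - L^2 := by
    rw [pow_two, Complex.mul_re, hw_re, hw_im]; ring
  have hwsq_im : (w^2).im = 2*x*L := by
    rw [pow_two, Complex.mul_im, hw_re, hw_im]; ring
  have hnsw : Complex.normSq w = x^2 + L^2 := by
    simp [Complex.normSq_apply, hw_re, hw_im]; ring
  have hwne : w ≠ 0 := by
    intro h
    rw [h] at hnsw
    simp at hnsw
    exact hne hnsw.symm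
  set g : ℕ → ℂ := fun n => 1 + (((r^2*((n:ℝ)+1)^2))⁻¹ : ℝ) * w^2 with hg
  have hcne : ∀ n : ℕ, (r^2*((n:ℝ)+1)^2) ≠ 0 := by
    intro n; positivity
  have hterm : ∀ n : ℕ, (1 + 2 * (x^2 - L^2) / (r^2 * ((n:ℝ)+1)^2)
        + (x^2 + L^2)^2 / (r^4 * ((n:ℝ)+1)^4)) = Complex.normSq (g n) := by
    intro n
    have hre : (g n).re = 1 + (r^2*((n:ℝ)+1)^2)⁻¹ * (x^2 - L^2) := by
      show (1 + (((r^2*((n:ℝ)+1)^2))⁻¹ : ℝ) * w^2 : ℂ).re = _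
      rw [Complex.add_re, Complex.one_re, Complex.re_ofReal_mul, hwsq_re]
    have him : (g n).im = (r^2*((n:ℝ)+1)^2)⁻¹ * (2*x*L) := by
      show (1 + (((r^2*((n:ℝ)+1)^2))⁻¹ : ℝ) * w^2 : ℂ).im = _
      rw [Complex.add_im, Complex.one_im, Complex.im_ofReal_mul, hwsq_im, zero_add]
    rw [Complex.normSq_apply, hre, him]
    have hn : ((n:ℝ)+1) ≠ 0 := by positivity
    field_simp
    ring
  set ζ : ℂ := Complex.I * w / r with hζ
  have hζne : ζ ≠ 0 := by
    simp [hζ, div_eq_zero_iff, Complex.I_ne_zero, hwne, Complex.ofReal_eq_zero, hrne]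
  have hπζne : (π : ℂ) * ζ ≠ 0 := mul_ne_zero (by exact_mod_cast Complex.ofReal_ne_zero.mpr hπ) hζne
  have hgf : ∀ n : ℕ, (1 : ℂ) - ζ^2 / ((n:ℂ)+1)^2 = g n := by
    intro n
    have hn : ((n:ℂ)+1) ≠ 0 := by norm_cast
    have hrC : (r : ℂ) ≠ 0 := Complex.ofReal_ne_zero.mpr hrne
    have hζ2 : ζ^2 = -(w^2/(r:ℂ)^2) := by
      rw [hζ, div_pow, mul_pow, Complex.I_sq]; ring
    rw [hζ2]
    simp only [hg]
    push_cast
    field_simp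
    ring
  -- Euler product
  have h1 := Complex.tendsto_euler_sin_prod ζ
  have h2 : Filter.Tendsto (fun n : ℕ => ∏ j ∈ Finset.range n, g j) Filter.atTop
      (nhds (Complex.sin (π * ζ) / (π * ζ))) := by
    have := h1.div_const ((π : ℂ) * ζ)
    refine this.congr (fun n => ?_)
    rw [mul_div_cancel_left₀ _ hπζne]
    exact Finset.prod_congr rfl (fun j _ => hgf j)
  set S : ℂ := Complex.sin (π * ζ) / (π * ζ) with hS
  have hRHS : Complex.normSq S = (r^2 / (2 * π^2)) *
      (Real.cosh (2 * π * x / r) - Real.cos (2 * π * L / r)) / (x^2 + L^2) := by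
    have hsin : Complex.sin ((π : ℂ) * ζ) = Complex.sinh ((π : ℂ) * w / r) * Complex.I := by
      rw [← Complex.sin_mul_I]
      congr 1
      rw [hζ]; ring
    have harg : (π : ℂ) * w / (r : ℂ) = ((π * x / r : ℝ) : ℂ) + ((π * L / r : ℝ) : ℂ) * Complex.I := by
      rw [hw]; push_cast; field_simp
    have hnum : Complex.normSq (Complex.sin ((π : ℂ) * ζ))
        = (Real.cosh (2 * π * x / r) - Real.cos (2 * π * L / r)) / 2 := by
      rw [hsin, map_mul, Complex.normSq_I, mul_one, harg, normSq_sinh_aux]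
      ring_nf
    have hden : Complex.normSq ((π : ℂ) * ζ) = π^2 * (x^2 + L^2) / r^2 := by
      rw [hζ]
      rw [map_mul, map_div₀, map_mul, Complex.normSq_I, hnsw]
      simp [Complex.normSq_ofReal]
      ring
    rw [hS, map_div₀, hnum, hden]
    field_simp
  by_cases hz : ∃ N : ℕ, g N = 0
  · -- a factor vanishes; both sides are zero
    obtain ⟨N, hN⟩ := hz
    have hLHS : HasProd (fun n : ℕ => Complex.normSq (g n)) 0 := by
      refine Filter.Tendsto.congr' ?_ tendsto_const_nhds
      filter_upwards [Filter.eventually_ge_atTop ({N} : Finset ℕ)] with s hs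
      exact (Finset.prod_eq_zero (Finset.singleton_subset_iff.mp hs)
        (by rw [hN]; simp)).symm
    -- extract x = 0 and L = ± r (N+1)
    have hNz : w^2 = -(((r^2*((N:ℝ)+1)^2) : ℝ) : ℂ) := by
      have h := hN
      rw [hg] at h
      simp only at h
      have hrC : (r:ℂ) ≠ 0 := Complex.ofReal_ne_zero.mpr hrne
      have hnC : ((N:ℂ)+1) ≠ 0 := by norm_cast
      push_cast at h ⊢
      field_simp at h
      linear_combination h
    have hre0 : x^2 - L^2 = -(r^2*((N:ℝ)+1)^2) := by
      have := congrArg Complex.re hNz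
      rwa [hwsq_re, Complex.neg_re, Complex.ofReal_re] at this
    have him0 : 2*x*L = 0 := by
      have := congrArg Complex.im hNz
      rwa [hwsq_im, Complex.neg_im, Complex.ofReal_im, neg_zero] at this
    have hx0 : x = 0 := by
      rcases mul_eq_zero.mp him0 with h | h
      · rcases mul_eq_zero.mp h with h' | h'
        · norm_num at h'
        · exact h'
      · -- L = 0, contradiction
        exfalso
        rw [h] at hre0
        nlinarith [sq_nonneg x, sq_nonneg ((N:ℝ)+1), hr, mul_pos (mul_pos hr hr) (mul_pos (by positivity : (0:ℝ) < (N:ℝ)+1) (by positivity : (0:ℝ) < (N:ℝ)+1))]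
    have hL2 : L^2 = r^2*((N:ℝ)+1)^2 := by
      rw [hx0] at hre0; nlinarith [hre0]
    have hcos1 : Real.cos (2 * π * L / r) = 1 := by
      have : L = r * ((N:ℝ)+1) ∨ L = -(r * ((N:ℝ)+1)) := by
        apply sq_eq_sq_iff_eq_or_eq_neg.mp
        rw [hL2, mul_pow]
      rcases this with h | h
      · rw [h]
        have : 2 * π * (r * ((N:ℝ)+1)) / r = ((N+1 : ℕ) : ℝ) * (2 * π) := by
          push_cast; field_simp
        rw [this, Real.cos_nat_mul_two_pi]
      · rw [h]
        have : 2 * π * (-(r * ((N:ℝ)+1))) / r = -(((N+1 : ℕ) : ℝ) * (2 * π)) := by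
          push_cast; field_simp
        rw [this, Real.cos_neg, Real.cos_nat_mul_two_pi]
    have hLHS' : (∏' n : ℕ, (1 + 2 * (x^2 - L^2) / (r^2 * ((n:ℝ)+1)^2)
        + (x^2 + L^2)^2 / (r^4 * ((n:ℝ)+1)^4))) = 0 := by
      rw [tprod_congr hterm]
      exact hLHS.tprod_eq
    rw [hLHS', hx0, hcos1]
    simp [Real.cosh_zero]
  · push_neg at hz
    -- summability of logs
    have hsum : Summable (fun n : ℕ => Complex.log (g n)) := by
      have hbase : Summable (fun n : ℕ => (3/2) * (‖w^2‖ * (r^2*((n:ℝ)+1)^2)⁻¹)) := by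
        have h0 : Summable (fun n : ℕ => 1 / (n : ℝ) ^ 2) :=
          Real.summable_one_div_nat_pow.mpr one_lt_two
        have h1 := (summable_nat_add_iff 1).mpr h0
        refine ((h1.mul_left ((r^2)⁻¹)).mul_left ((3/2) * ‖w^2‖)).congr (fun n => ?_)
        push_cast
        rw [mul_inv]
        ring
      apply Summable.of_norm_bounded_eventually_nat hbase
      have htend : Filter.Tendsto (fun n : ℕ => ‖w^2‖ * (r^2*((n:ℝ)+1)^2)⁻¹)
          Filter.atTop (nhds 0) := by
        rw [show (0:ℝ) = ‖w^2‖ * 0 by ring]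
        apply Filter.Tendsto.const_mul
        apply Filter.Tendsto.inv_tendsto_atTop
        apply Filter.Tendsto.const_mul_atTop (by positivity : (0:ℝ) < r^2)
        exact (Filter.tendsto_pow_atTop two_ne_zero).comp
          (Filter.tendsto_atTop_add_const_right _ 1 tendsto_natCast_atTop_atTop)
      filter_upwards [htend.eventually_le_const (by norm_num : (0:ℝ) < 1/2)] with n hn
      have habs : ‖(((r^2*((n:ℝ)+1)^2)⁻¹ : ℝ) : ℂ) * w^2‖ = ‖w^2‖ * (r^2*((n:ℝ)+1)^2)⁻¹ := by
        rw [norm_mul, Complex.norm_real, Real.norm_eq_abs, abs_of_nonneg (by positivity)]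
        ring
      calc ‖Complex.log (g n)‖ ≤ 3/2 * ‖(((r^2*((n:ℝ)+1)^2)⁻¹ : ℝ) : ℂ) * w^2‖ := by
            apply Complex.norm_log_one_add_half_le_self
            rw [habs]; exact hn
        _ = 3/2 * (‖w^2‖ * (r^2*((n:ℝ)+1)^2)⁻¹) := by rw [habs]
    have hmult : Multipliable g :=
      Complex.multipliable_of_summable_log hsum
    have hgp : HasProd g S := by
      have ht := hmult.hasProd
      rwa [tendsto_nhds_unique ht.tendsto_prod_nat h2] at ht
    have hF : HasProd (fun n : ℕ => Complex.normSq (g n)) (Complex.normSq S) := by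
      have := hgp.map Complex.normSq.toMonoidHom Complex.continuous_normSq
      exact this
    calc (∏' n : ℕ, (1 + 2 * (x^2 - L^2) / (r^2 * ((n:ℝ)+1)^2)
          + (x^2 + L^2)^2 / (r^4 * ((n:ℝ)+1)^4)))
        = ∏' n : ℕ, Complex.normSq (g n) := tprod_congr hterm
      _ = Complex.normSq S := hF.tprod_eq
      _ = _ := hRHS
end

section
/- For every real a ≠ 0, ∫_{-π/2}^{π/2} 1/(i(x) - a + ln(2 cos x)) dx = -π/a + π·e^a/(e^a - 1)·H(ln 2 - a), where H is the Heaviside step function (H(t)=1 for t>0, H(t)=0 for t<0), assuming a ≠ ln 2. -/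
open Real Complex Filter Metric Set intervalIntegral MeasureTheory Topology

noncomputable def H (t : ℝ) : ℝ := if 0 < t then 1 else 0



-- aux 1 : slit plane membership
lemma aux_slit {z : ℂ} (hz : z ∈ closedBall (0:ℂ) 1) (hz1 : z ≠ -1) :
    1 + z ∈ Complex.slitPlane := by
  rw [Complex.mem_slitPlane_iff]
  left
  simp only [Complex.add_re, Complex.one_re]
  by_contra hle
  push_neg at hle
  have h1 : ‖z‖ ≤ 1 := by simpa using mem_closedBall_zero_iff.mp hz
  have h2 : z.re * z.re + z.im * z.im ≤ 1 := by
    have h3 := Complex.sq_norm z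
    have h4 : ‖z‖ ^ 2 ≤ 1 := by nlinarith [norm_nonneg z]
    rw [h3, Complex.normSq_apply] at h4
    linarith
  have hre : z.re ≤ -1 := by linarith
  have him : z.im = 0 := by nlinarith
  have hre' : z.re = -1 := by nlinarith
  exact hz1 (Complex.ext (by simp [hre']) (by simp [him]))

-- aux 2 : zeros of the denominator
lemma aux_denom {a : ℝ} {z : ℂ} (hz1 : z ≠ -1) :
    Complex.log (1 + z) = (a : ℂ) ↔ z = Complex.exp a - 1 := by
  constructor
  · intro h
    have h0 : (1 : ℂ) + z ≠ 0 := by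
      intro h0; apply hz1; linear_combination h0
    have := Complex.exp_log h0
    rw [h] at this
    linear_combination -this
  · intro h
    have : (1 : ℂ) + z = Complex.exp a := by rw [h]; ring
    rw [this, Complex.log_exp] <;> simp [Real.pi_pos, Real.pi_nonneg]

-- aux 3 : tendsto of inverse denominator at -1
lemma aux_tendsto (a : ℝ) :
    Tendsto (fun z : ℂ => (Complex.log (1 + z) - (a : ℂ))⁻¹) (𝓝[≠] (-1 : ℂ)) (𝓝 0) := by
  have h1 : Tendsto (fun z : ℂ => ‖1 + z‖) (𝓝[≠] (-1 : ℂ)) (𝓝[>] 0) := by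
    rw [tendsto_nhdsWithin_iff]
    constructor
    · have hc : Continuous fun z : ℂ => ‖1 + z‖ := by continuity
      have := (hc.tendsto (-1)).mono_left (nhdsWithin_le_nhds (s := {(-1 : ℂ)}ᶜ))
      simpa using this
    · filter_upwards [self_mem_nhdsWithin] with z hz
      simp only [mem_Ioi]
      have : (1 : ℂ) + z ≠ 0 := by
        intro h0; apply hz; simpa using (by linear_combination h0 : z = -1)
      simpa [AbsoluteValue.pos_iff] using this
  have h2 : Tendsto (fun z : ℂ => Real.log (‖1 + z‖)) (𝓝[≠] (-1 : ℂ)) atBot :=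
    Real.tendsto_log_nhdsGT_zero.comp h1
  have h3 : Tendsto (fun z : ℂ => ‖Complex.log (1 + z) - (a : ℂ)‖) (𝓝[≠] (-1 : ℂ)) atTop := by
    apply tendsto_atTop_mono (f := fun z : ℂ => -Real.log (‖1 + z‖) - |a|)
    · intro z
      have e1 : ‖Complex.log (1 + z)‖ - ‖(a : ℂ)‖ ≤ ‖Complex.log (1 + z) - (a : ℂ)‖ :=
        norm_sub_norm_le _ _
      have e2 : |Real.log (‖1 + z‖)| ≤ ‖Complex.log (1 + z)‖ := by
        have := Complex.abs_re_le_norm (Complex.log (1 + z))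
        rwa [Complex.log_re] at this
      have e3 : ‖(a : ℂ)‖ = |a| := by simp
      have e4 : -Real.log (‖1 + z‖) ≤ |Real.log (‖1 + z‖)| := neg_le_abs _
      linarith
    · have := tendsto_neg_atBot_atTop.comp h2
      simpa [sub_eq_add_neg] using tendsto_atTop_add_const_right _ (-|a|) this
  have h4 : Tendsto (fun z : ℂ => Complex.log (1 + z) - (a : ℂ)) (𝓝[≠] (-1 : ℂ))
      (Bornology.cobounded ℂ) := tendsto_norm_atTop_iff_cobounded.mp h3
  exact Filter.tendsto_inv₀_cobounded.comp h4

noncomputable def FF (a : ℝ) : ℂ → ℂ :=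
  Function.update (fun z : ℂ => (Complex.log (1 + z) - (a : ℂ))⁻¹) (-1) 0

lemma step1 (a : ℝ) :
    (∫ x in (-(π/2))..(π/2), (1 : ℂ) / (Complex.I * x - a + Real.log (2 * Real.cos x)))
      = (2 : ℂ)⁻¹ * ∫ θ in (0:ℝ)..(2*π), FF a (Complex.exp (θ * Complex.I)) := by
  have heq : ∀ x ∈ Ioo (-(π/2)) (π/2),
      (1 : ℂ) / (Complex.I * x - a + Real.log (2 * Real.cos x))
        = FF a (Complex.exp (2 * x * Complex.I)) := by
    intro x hx
    have hcos : 0 < Real.cos x := Real.cos_pos_of_mem_Ioo hx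
    have hexp : (1 : ℂ) + Complex.exp (2 * x * Complex.I)
        = Complex.exp ((Real.log (2 * Real.cos x) : ℂ) + x * Complex.I) := by
      rw [Complex.exp_add, ← Complex.ofReal_exp, Real.exp_log (by positivity)]
      push_cast
      rw [show Complex.cos x = (Complex.exp (x * Complex.I) + Complex.exp (-x * Complex.I)) / 2
        from rfl]
      have h1 : Complex.exp (-(x:ℂ) * Complex.I) * Complex.exp ((x:ℂ) * Complex.I) = 1 := by
        rw [← Complex.exp_add]; ring_nf; exact Complex.exp_zero
      have h2 : Complex.exp ((x:ℂ) * Complex.I) * Complex.exp ((x:ℂ) * Complex.I)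
          = Complex.exp (2 * (x:ℂ) * Complex.I) := by
        rw [← Complex.exp_add]; ring_nf
      linear_combination -h1 - h2
    have hne : Complex.exp (2 * x * Complex.I) ≠ -1 := by
      intro h
      have : (1 : ℂ) + Complex.exp (2 * x * Complex.I) = 0 := by rw [h]; ring
      rw [hexp] at this
      exact Complex.exp_ne_zero _ this
    have hlog : Complex.log (1 + Complex.exp (2 * x * Complex.I))
        = (Real.log (2 * Real.cos x) : ℂ) + x * Complex.I := by
      rw [hexp, Complex.log_exp]
      · simp only [Complex.add_im, Complex.ofReal_im, Complex.mul_im, Complex.ofReal_re,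
          Complex.I_im, Complex.I_re, mul_zero, mul_one, zero_add]
        obtain ⟨h1, h2⟩ := hx
        ring_nf
        linarith [Real.pi_pos]
      · simp only [Complex.add_im, Complex.ofReal_im, Complex.mul_im, Complex.ofReal_re,
          Complex.I_im, Complex.I_re, mul_zero, mul_one, zero_add]
        obtain ⟨h1, h2⟩ := hx
        ring_nf
        linarith [Real.pi_pos]
    rw [FF, Function.update_of_ne hne, hlog, one_div]
    congr 1
    ring
  have h1 : (∫ x in (-(π/2))..(π/2), (1 : ℂ) / (Complex.I * x - a + Real.log (2 * Real.cos x)))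
      = ∫ x in (-(π/2))..(π/2), FF a (Complex.exp (2 * x * Complex.I)) := by
    apply intervalIntegral.integral_congr_ae
    have hm : ∀ᵐ x : ℝ, x ≠ π / 2 := by
      rw [MeasureTheory.ae_iff]
      have : {x : ℝ | ¬x ≠ π / 2} = {π / 2} := by ext y; simp
      rw [this]
      exact measure_singleton _
    filter_upwards [hm] with x hxne hxmem
    rw [Set.uIoc_of_le (by linarith [Real.pi_pos])] at hxmem
    exact heq x ⟨hxmem.1, lt_of_le_of_ne hxmem.2 hxne⟩
  rw [h1]
  have h2 : (∫ x in (-(π/2))..(π/2), FF a (Complex.exp (2 * x * Complex.I)))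
      = (2 : ℝ)⁻¹ • ∫ u in (2 * (-(π/2)))..(2 * (π/2)), FF a (Complex.exp (u * Complex.I)) := by
    have := intervalIntegral.integral_comp_mul_left
      (a := -(π/2)) (b := π/2) (f := fun u : ℝ => FF a (Complex.exp (u * Complex.I)))
      (c := (2:ℝ)) two_ne_zero
    rw [← this]
    apply intervalIntegral.integral_congr
    intro x _
    push_cast
    ring_nf
  rw [h2]
  have hper : Function.Periodic (fun u : ℝ => FF a (Complex.exp (u * Complex.I))) (2 * π) := by
    intro u
    simp only
    congr 1
    push_cast
    rw [add_mul, Complex.exp_add]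
    simp [Complex.exp_two_pi_mul_I]
  have h3 : (∫ u in (2 * (-(π/2)))..(2 * (π/2)), FF a (Complex.exp (u * Complex.I)))
      = ∫ θ in (0:ℝ)..(2*π), FF a (Complex.exp (θ * Complex.I)) := by
    have := hper.intervalIntegral_add_eq (-π) 0
    have e1 : 2 * (-(π/2)) = -π := by ring
    have e2 : 2 * (π/2) = -π + 2 * π := by ring
    rw [e1, e2, this, zero_add]
  rw [h3, Complex.real_smul]
  push_cast
  ring

lemma branch1 (a : ℝ) (hla : Real.log 2 < a) :
    (∫ θ in (0:ℝ)..(2*π), FF a (Complex.exp (θ * Complex.I))) = -(2*π) * (a:ℂ)⁻¹ := by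
  have ha : (0:ℝ) < a := lt_trans (Real.log_pos (by norm_num)) hla
  have hw0 : (1:ℝ) < Real.exp a - 1 := by
    have h2 : (2:ℝ) < Real.exp a := by
      rw [← Real.exp_log (by norm_num : (0:ℝ) < 2)]
      exact Real.exp_lt_exp.mpr hla
    linarith
  have hden : ∀ z ∈ closedBall (0:ℂ) 1, z ≠ -1 → Complex.log (1 + z) - (a:ℂ) ≠ 0 := by
    intro z hz hz1 h
    rw [sub_eq_zero, aux_denom hz1] at h
    have habs : ‖z‖ ≤ 1 := by simpa using mem_closedBall_zero_iff.mp hz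
    rw [h] at habs
    have : Complex.exp (a:ℂ) - 1 = ((Real.exp a - 1 : ℝ) : ℂ) := by
      push_cast [Complex.ofReal_exp]; ring
    rw [this, Complex.norm_real, Real.norm_eq_abs] at habs
    rw [abs_of_pos (by linarith)] at habs
    linarith
  have hcont : ContinuousOn (FF a) (closedBall (0:ℂ) 1) := by
    intro z hz
    by_cases hz1 : z = -1
    · subst hz1
      rw [FF, continuousWithinAt_update_same]
      exact (aux_tendsto a).mono_left
        (nhdsWithin_mono _ (fun w hw => hw.2))
    · have hca : ContinuousAt (fun w : ℂ => (Complex.log (1 + w) - (a:ℂ))⁻¹) z := by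
        apply ContinuousAt.inv₀
        · exact ((continuousAt_clog (aux_slit hz hz1)).comp
            (by fun_prop)).sub continuousAt_const
        · exact hden z hz hz1
      have heq : FF a =ᶠ[𝓝 z] (fun w : ℂ => (Complex.log (1 + w) - (a:ℂ))⁻¹) := by
        filter_upwards [isOpen_compl_singleton.mem_nhds (show z ∈ ({-1}ᶜ : Set ℂ) by simpa using hz1)] with w hw
        rw [FF, Function.update_of_ne hw]
      exact (hca.congr heq.symm).continuousWithinAt
  have hdiff : ∀ z ∈ ball (0:ℂ) 1 \ (∅ : Set ℂ), DifferentiableAt ℂ (FF a) z := by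
    intro z hz
    have hzb : z ∈ ball (0:ℂ) 1 := hz.1
    have hz1 : z ≠ -1 := by
      intro h; subst h
      have := mem_ball_zero_iff.mp hzb
      simp at this
    have hda : DifferentiableAt ℂ (fun w : ℂ => (Complex.log (1 + w) - (a:ℂ))⁻¹) z := by
      apply DifferentiableAt.inv
      · exact ((Complex.differentiableAt_log (aux_slit (ball_subset_closedBall hzb) hz1)).comp z
          (by fun_prop)).sub_const _
      · exact hden z (ball_subset_closedBall hzb) hz1
    have heq : FF a =ᶠ[𝓝 z] (fun w : ℂ => (Complex.log (1 + w) - (a:ℂ))⁻¹) := by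
      filter_upwards [isOpen_compl_singleton.mem_nhds (show z ∈ ({-1}ᶜ : Set ℂ) by simpa using hz1)] with w hw
      rw [FF, Function.update_of_ne hw]
    exact hda.congr_of_eventuallyEq heq
  have hC := Complex.two_pi_I_inv_smul_circleIntegral_sub_inv_smul_of_differentiable_on_off_countable
    (Set.countable_empty) (show (0:ℂ) ∈ ball (0:ℂ) 1 by simp) hcont hdiff
  have hF0 : FF a 0 = (-(a:ℂ))⁻¹ := by
    rw [FF, Function.update_of_ne (by norm_num)]
    simp [Complex.log_one]
  have h2piI : (2 * (π:ℂ) * Complex.I) ≠ 0 := by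
    simp [Real.pi_ne_zero, Complex.I_ne_zero]
  have hsm : (∮ z in C((0:ℂ), 1), (z - 0)⁻¹ • FF a z) = (2 * (π:ℂ) * Complex.I) * (-(a:ℂ))⁻¹ := by
    rw [← hF0]
    rw [inv_smul_eq_iff₀ h2piI] at hC
    rw [hC, smul_eq_mul]
  have hunfold : (∮ z in C((0:ℂ), 1), (z - 0)⁻¹ • FF a z)
      = ∫ θ in (0:ℝ)..(2*π), Complex.I * FF a (Complex.exp (θ * Complex.I)) := by
    simp only [circleIntegral, deriv_circleMap, circleMap, smul_eq_mul, Complex.ofReal_one,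
      one_mul, zero_add, sub_zero]
    apply intervalIntegral.integral_congr
    intro θ _
    have h0 : Complex.exp (θ * Complex.I) ≠ 0 := Complex.exp_ne_zero _
    field_simp
  have hfin : Complex.I * (∫ θ in (0:ℝ)..(2*π), FF a (Complex.exp (θ * Complex.I)))
      = (2 * (π:ℂ) * Complex.I) * (-(a:ℂ))⁻¹ := by
    rw [← intervalIntegral.integral_const_mul, ← hunfold, hsm]
  have haC : (a:ℂ) ≠ 0 := by exact_mod_cast ne_of_gt ha
  apply mul_left_cancel₀ Complex.I_ne_zero
  rw [hfin, inv_neg]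
  ring

lemma branch2 (a : ℝ) (ha : a ≠ 0) (hla : a < Real.log 2) :
    (∫ θ in (0:ℝ)..(2*π), FF a (Complex.exp (θ * Complex.I)))
      = 2*π*(Complex.exp a * (Complex.exp a - 1)⁻¹ - (a:ℂ)⁻¹) := by
  have haC : (a : ℂ) ≠ 0 := by exact_mod_cast ha
  set w : ℂ := Complex.exp (a:ℂ) - 1 with hw
  have hwr : w = ((Real.exp a - 1 : ℝ) : ℂ) := by
    rw [hw]; push_cast [Complex.ofReal_exp]; ring
  have hexpa2 : Real.exp a < 2 := by
    rw [← Real.exp_log (by norm_num : (0:ℝ) < 2)]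
    exact Real.exp_lt_exp.mpr hla
  have hexpa0 : (0:ℝ) < Real.exp a := Real.exp_pos a
  have hexpane1 : Real.exp a ≠ 1 := by
    intro h; exact ha (by rwa [Real.exp_eq_one_iff] at h)
  have habsw : ‖w‖ < 1 := by
    rw [hwr, Complex.norm_real, Real.norm_eq_abs, abs_lt]
    constructor <;> linarith
  have hwball : w ∈ ball (0:ℂ) 1 := by
    rw [mem_ball_zero_iff]; exact habsw
  have hwne0 : w ≠ 0 := by
    rw [hwr]
    simp only [ne_eq, Complex.ofReal_eq_zero]
    intro h; apply hexpane1; linarith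
  have hwne1 : w ≠ -1 := by
    rw [hwr]
    intro h
    have : Real.exp a - 1 = -1 := by exact_mod_cast h
    linarith
  have hexpaC : (1 : ℂ) + w = Complex.exp (a:ℂ) := by rw [hw]; ring
  have hlogw : Complex.log (1 + w) = (a:ℂ) := by
    rw [hexpaC, Complex.log_exp] <;> simp [Real.pi_pos, Real.pi_nonneg]
  have hden : ∀ z ∈ closedBall (0:ℂ) 1, z ≠ -1 → z ≠ w → Complex.log (1 + z) - (a:ℂ) ≠ 0 := by
    intro z _ hz1 hzw h
    rw [sub_eq_zero, aux_denom hz1] at h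
    exact hzw h
  set g : ℂ → ℂ := fun z => (z - w) * (Complex.log (1 + z) - (a:ℂ))⁻¹ with hgdef
  set G : ℂ → ℂ := Function.update (Function.update g (-1) 0) w (Complex.exp (a:ℂ)) with hGdef
  have hG_at : ∀ z : ℂ, z ≠ -1 → z ≠ w → G z = g z := by
    intro z hz1 hzw
    rw [hGdef, Function.update_of_ne hzw, Function.update_of_ne hz1]
  have hG_neg1 : G (-1) = 0 := by
    rw [hGdef, Function.update_of_ne (Ne.symm hwne1), Function.update_self]
  have hG_w : G w = Complex.exp (a:ℂ) := by rw [hGdef, Function.update_self]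
  have hG_0 : G 0 = w * (a:ℂ)⁻¹ := by
    rw [hG_at 0 (by norm_num) (Ne.symm hwne0), hgdef]
    simp only [zero_sub, add_zero, Complex.log_one, inv_neg]
    ring
  -- continuity of G
  have hGcont : ContinuousOn G (closedBall (0:ℂ) 1) := by
    intro z hz
    by_cases hzw : z = w
    · subst hzw
      rw [hGdef, continuousWithinAt_update_same]
      have hslit : 1 + w ∈ Complex.slitPlane := aux_slit (ball_subset_closedBall hwball) hwne1
      have h1 : HasDerivAt (fun y : ℂ => (1:ℂ) + y) 1 w := by
        simpa using (hasDerivAt_id w).const_add (1:ℂ)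
      have h2 : HasDerivAt (fun y : ℂ => Complex.log (1 + y) - (a:ℂ)) ((1+w)⁻¹) w := by
        simpa using ((Complex.hasDerivAt_log hslit).comp w h1).sub_const (a:ℂ)
      have h3 : Tendsto (slope (fun y : ℂ => Complex.log (1 + y) - (a:ℂ)) w) (𝓝[≠] w)
          (𝓝 ((1+w)⁻¹)) := hasDerivAt_iff_tendsto_slope.mp h2
      have h4 : Tendsto (fun y : ℂ =>
            (slope (fun y : ℂ => Complex.log (1 + y) - (a:ℂ)) w y)⁻¹)
          (𝓝[≠] w) (𝓝 (Complex.exp (a:ℂ))) := by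
        have := h3.inv₀ (by rw [hexpaC] at *; exact inv_ne_zero (Complex.exp_ne_zero _))
        rwa [inv_inv, hexpaC] at this
      have h5 : Tendsto g (𝓝[≠] w) (𝓝 (Complex.exp (a:ℂ))) := by
        apply Tendsto.congr' _ h4
        filter_upwards [self_mem_nhdsWithin] with y hy
        have hyw : y ≠ w := hy
        rw [slope_def_field, hlogw, sub_self, sub_zero, inv_div, div_eq_mul_inv]
      apply Tendsto.congr' _ (h5.mono_left (nhdsWithin_mono _ (fun y hy => hy.2)))
      have hmemc : ({-1}ᶜ : Set ℂ) ∈ 𝓝[closedBall (0:ℂ) 1 \ {w}] w :=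
        mem_nhdsWithin_of_mem_nhds (isOpen_compl_singleton.mem_nhds (by simpa using hwne1))
      filter_upwards [hmemc] with y hy
      rw [Function.update_of_ne hy]
    · by_cases hz1 : z = -1
      · subst hz1
        have hinner : ContinuousWithinAt (Function.update g (-1) 0) (closedBall (0:ℂ) 1) (-1) := by
          rw [continuousWithinAt_update_same]
          have h1 : Tendsto (fun y : ℂ => (Complex.log (1 + y) - (a:ℂ))⁻¹)
              (𝓝[closedBall (0:ℂ) 1 \ {-1}] (-1)) (𝓝 0) :=
            (aux_tendsto a).mono_left (nhdsWithin_mono _ (fun y hy => hy.2))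
          have h2 : Tendsto (fun y : ℂ => y - w) (𝓝[closedBall (0:ℂ) 1 \ {-1}] (-1))
              (𝓝 (-1 - w)) :=
            ((continuous_id.sub continuous_const).tendsto _).mono_left nhdsWithin_le_nhds
          have := h2.mul h1
          rw [mul_zero] at this
          exact this
        apply hinner.congr_of_eventuallyEq
        · have : ({w}ᶜ : Set ℂ) ∈ 𝓝[closedBall (0:ℂ) 1] (-1 : ℂ) :=
            mem_nhdsWithin_of_mem_nhds (isOpen_compl_singleton.mem_nhds (by simpa using hzw))
          filter_upwards [this] with y hy
          rw [hGdef, Function.update_of_ne hy]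
        · rw [hG_neg1, Function.update_self]
      · have hca : ContinuousAt g z := by
          apply ContinuousAt.mul (by fun_prop)
          exact ContinuousAt.inv₀
            (((continuousAt_clog (aux_slit hz hz1)).comp (by fun_prop)).sub continuousAt_const)
            (hden z hz hz1 hzw)
        have heqG : G =ᶠ[𝓝 z] g := by
          have hopen : IsOpen ({-1, w}ᶜ : Set ℂ) :=
            ((Set.finite_singleton w).insert (-1)).isClosed.isOpen_compl
          filter_upwards [hopen.mem_nhds (by simp [hz1, hzw])] with y hy
          simp only [mem_compl_iff, mem_insert_iff, mem_singleton_iff, not_or] at hy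
          exact hG_at y hy.1 hy.2
        exact (hca.congr heqG.symm).continuousWithinAt
  -- differentiability of G off {w}
  have hGdiff : ∀ z ∈ ball (0:ℂ) 1 \ {w}, DifferentiableAt ℂ G z := by
    intro z hz
    obtain ⟨hzb, hzw'⟩ := hz
    have hzw : z ≠ w := hzw'
    have hz1 : z ≠ -1 := by
      intro h; subst h; simpa using mem_ball_zero_iff.mp hzb
    have hd : DifferentiableAt ℂ g z := by
      apply DifferentiableAt.mul (by fun_prop)
      exact DifferentiableAt.inv
        (((Complex.differentiableAt_log (aux_slit (ball_subset_closedBall hzb) hz1)).comp z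
          (by fun_prop)).sub_const _)
        (hden z (ball_subset_closedBall hzb) hz1 hzw)
    have heqG : G =ᶠ[𝓝 z] g := by
      have hopen : IsOpen ({-1, w}ᶜ : Set ℂ) :=
        ((Set.finite_singleton w).insert (-1)).isClosed.isOpen_compl
      filter_upwards [hopen.mem_nhds (by simp [hz1, hzw])] with y hy
      simp only [mem_compl_iff, mem_insert_iff, mem_singleton_iff, not_or] at hy
      exact hG_at y hy.1 hy.2
    exact hd.congr_of_eventuallyEq heqG
  -- Cauchy integral formula, twice
  have h2piI : (2 * (π:ℂ) * Complex.I) ≠ 0 := by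
    simp [Real.pi_ne_zero, Complex.I_ne_zero]
  have hC0 := Complex.two_pi_I_inv_smul_circleIntegral_sub_inv_smul_of_differentiable_on_off_countable
    (Set.countable_singleton w) (show (0:ℂ) ∈ ball (0:ℂ) 1 by simp) hGcont hGdiff
  have hCw := Complex.two_pi_I_inv_smul_circleIntegral_sub_inv_smul_of_differentiable_on_off_countable
    (Set.countable_singleton w) hwball hGcont hGdiff
  rw [inv_smul_eq_iff₀ h2piI] at hC0 hCw
  rw [hG_0] at hC0
  rw [hG_w] at hCw
  -- unfold circle integrals
  have hmem : ∀ θ : ℝ, Complex.exp ((θ:ℂ) * Complex.I) ∈ closedBall (0:ℂ) 1 := by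
    intro θ
    rw [mem_closedBall_zero_iff]
    simp [Complex.norm_exp_ofReal_mul_I]
  have hznew : ∀ θ : ℝ, Complex.exp ((θ:ℂ) * Complex.I) ≠ w := by
    intro θ h
    rw [← h] at habsw
    simp [Complex.norm_exp_ofReal_mul_I] at habsw
  have hzne0 : ∀ θ : ℝ, Complex.exp ((θ:ℂ) * Complex.I) ≠ 0 := fun θ => Complex.exp_ne_zero _
  have hcirc : Continuous fun θ : ℝ => Complex.exp ((θ:ℂ) * Complex.I) := by fun_prop
  have hGcomp : Continuous fun θ : ℝ => G (Complex.exp ((θ:ℂ) * Complex.I)) :=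
    hGcont.comp_continuous hcirc hmem
  have hcont1 : Continuous fun θ : ℝ => Complex.exp ((θ:ℂ) * Complex.I) * Complex.I *
      ((Complex.exp ((θ:ℂ) * Complex.I) - w)⁻¹ * G (Complex.exp ((θ:ℂ) * Complex.I))) := by
    apply Continuous.mul (by fun_prop)
    apply Continuous.mul _ hGcomp
    apply Continuous.inv₀ (by fun_prop)
    intro θ
    rw [sub_ne_zero]
    exact hznew θ
  have hcont0 : Continuous fun θ : ℝ => Complex.exp ((θ:ℂ) * Complex.I) * Complex.I *
      ((Complex.exp ((θ:ℂ) * Complex.I) - 0)⁻¹ * G (Complex.exp ((θ:ℂ) * Complex.I))) := by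
    apply Continuous.mul (by fun_prop)
    apply Continuous.mul _ hGcomp
    apply Continuous.inv₀ (by fun_prop)
    intro θ
    rw [sub_ne_zero]
    exact hzne0 θ
  have hunf1 : (∮ z in C((0:ℂ), 1), (z - w)⁻¹ • G z)
      = ∫ θ in (0:ℝ)..(2*π), Complex.exp ((θ:ℂ) * Complex.I) * Complex.I *
        ((Complex.exp ((θ:ℂ) * Complex.I) - w)⁻¹ * G (Complex.exp ((θ:ℂ) * Complex.I))) := by
    simp only [circleIntegral, deriv_circleMap, circleMap, smul_eq_mul, Complex.ofReal_one,
      one_mul, zero_add]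
  have hunf0 : (∮ z in C((0:ℂ), 1), (z - 0)⁻¹ • G z)
      = ∫ θ in (0:ℝ)..(2*π), Complex.exp ((θ:ℂ) * Complex.I) * Complex.I *
        ((Complex.exp ((θ:ℂ) * Complex.I) - 0)⁻¹ * G (Complex.exp ((θ:ℂ) * Complex.I))) := by
    simp only [circleIntegral, deriv_circleMap, circleMap, smul_eq_mul, Complex.ofReal_one,
      one_mul, zero_add]
  -- pointwise identity
  have key : ∀ θ : ℝ, Complex.I * FF a (Complex.exp ((θ:ℂ) * Complex.I))
      = w⁻¹ * (Complex.exp ((θ:ℂ) * Complex.I) * Complex.I *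
          ((Complex.exp ((θ:ℂ) * Complex.I) - w)⁻¹ * G (Complex.exp ((θ:ℂ) * Complex.I)))
        - Complex.exp ((θ:ℂ) * Complex.I) * Complex.I *
          ((Complex.exp ((θ:ℂ) * Complex.I) - 0)⁻¹ * G (Complex.exp ((θ:ℂ) * Complex.I)))) := by
    intro θ
    set z : ℂ := Complex.exp ((θ:ℂ) * Complex.I) with hzdef
    by_cases hz1 : z = -1
    · rw [hz1, hG_neg1]
      rw [show FF a (-1) = 0 from Function.update_self _ _ _]
      ring
    · have hFz : FF a z = (Complex.log (1 + z) - (a:ℂ))⁻¹ := Function.update_of_ne hz1 _ _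
      have hGz : G z = (z - w) * (Complex.log (1 + z) - (a:ℂ))⁻¹ := hG_at z hz1 (hznew θ)
      rw [hFz, hGz]
      have hd := hden z (hmem θ) hz1 (hznew θ)
      have h0 : z ≠ 0 := hzne0 θ
      have hzw' : z - w ≠ 0 := sub_ne_zero.mpr (hznew θ)
      field_simp
      ring
  -- assemble
  have hIint : Complex.I * (∫ θ in (0:ℝ)..(2*π), FF a (Complex.exp ((θ:ℂ) * Complex.I)))
      = w⁻¹ * ((2 * (π:ℂ) * Complex.I) * Complex.exp (a:ℂ)
          - (2 * (π:ℂ) * Complex.I) * (w * (a:ℂ)⁻¹)) := by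
    rw [← intervalIntegral.integral_const_mul]
    rw [intervalIntegral.integral_congr (g := fun θ : ℝ =>
      w⁻¹ * (Complex.exp ((θ:ℂ) * Complex.I) * Complex.I *
          ((Complex.exp ((θ:ℂ) * Complex.I) - w)⁻¹ * G (Complex.exp ((θ:ℂ) * Complex.I)))
        - Complex.exp ((θ:ℂ) * Complex.I) * Complex.I *
          ((Complex.exp ((θ:ℂ) * Complex.I) - 0)⁻¹ * G (Complex.exp ((θ:ℂ) * Complex.I)))))
      (fun θ _ => key θ)]
    rw [intervalIntegral.integral_const_mul,
      intervalIntegral.integral_sub (hcont1.intervalIntegrable _ _) (hcont0.intervalIntegrable _ _),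
      ← hunf1, ← hunf0, hC0, hCw, smul_eq_mul, smul_eq_mul]
  apply mul_left_cancel₀ Complex.I_ne_zero
  rw [hIint]
  field_simp



theorem stmt_2 (a : ℝ) (ha : a ≠ 0) (ha2 : a ≠ Real.log 2) :
    ∫ x in (-(π/2))..(π/2), (1 : ℂ) / (Complex.I * x - a + Real.log (2 * Real.cos x))
      = -(π : ℂ) / a + π * Complex.exp a / (Complex.exp a - 1) * (H (Real.log 2 - a) : ℂ) := by
  have haC : (a:ℂ) ≠ 0 := by exact_mod_cast ha
  rw [step1 a]
  rcases lt_or_gt_of_ne ha2 with h | h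
  · rw [branch2 a ha h]
    have hH : H (Real.log 2 - a) = 1 := if_pos (by simp only [sub_pos]; exact h)
    rw [hH]
    have hE : Complex.exp (a:ℂ) - 1 ≠ 0 := by
      rw [sub_ne_zero, ← Complex.ofReal_exp, ne_eq, Complex.ofReal_eq_one]
      exact fun h' => ha (by rwa [Real.exp_eq_one_iff] at h')
    push_cast
    field_simp
    ring
  · rw [branch1 a h]
    have hH : H (Real.log 2 - a) = 0 := if_neg (by push_neg; linarith)
    rw [hH]
    push_cast
    field_simp
    ring
end
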